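/- arXiv:1809.02661 — 4 statements merged into one kernel-verified Lean document; each statement's English description precedes it below -/
import Mathlib

section
/- Let d ≥ 1 be an integer, let z, w ∈ ℂ^d with z ≠ w, and fix j ∈ {1,…,d}. Then the function t ↦ (1/(2πi t)^d) · ((z̄_j − w̄_j)/(4t)) · e^{-‖z−w‖²/(4t)} is integrable on (0,∞) and ∫_{t=0}^{∞} (1/(2πi t)^d) ((z̄_j − w̄_j)/(4t)) e^{-‖z−w‖²/(4t)} dt = (4^{d-1}(d-1)!/(2πi)^d) · (z̄_j − w̄_j)/‖z−w‖^{2d}. Equivalently, away from the diagonal the ε→0, L→∞ limit of the scalar coefficient of the regularized propagator P_{ε<L}(z,w) exists and is proportional to the corresponding coefficient (z̄_j − w̄_j)/‖z−w‖^{2d} of the Bochner–Martinelli kernel. -/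
open MeasureTheory Set Real

lemma real_key (d : ℕ) (hd : 1 ≤ d) {c : ℝ} (hc : 0 < c) :
    IntegrableOn (fun t : ℝ => (t ^ (d + 1))⁻¹ * Real.exp (-(c / t))) (Set.Ioi 0) volume ∧
    ∫ t in Set.Ioi (0 : ℝ), (t ^ (d + 1))⁻¹ * Real.exp (-(c / t))
      = (Nat.factorial (d - 1) : ℝ) / c ^ d := by
  set f : ℝ → ℝ := fun y => y ^ ((d : ℝ) - 1) * Real.exp (-(c * y)) with hf
  have hfi : IntegrableOn f (Ioi 0) volume := by
    have := integrableOn_rpow_mul_exp_neg_mul_rpow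
      (s := (d : ℝ) - 1) (p := 1) (b := c) (by
        have : (1 : ℝ) ≤ (d : ℝ) := by exact_mod_cast hd
        linarith) one_pos hc
    refine this.congr_fun (fun x hx => ?_) measurableSet_Ioi
    simp [hf, Real.rpow_one, neg_mul]
  have hfint : ∫ y in Ioi (0 : ℝ), f y = (Nat.factorial (d - 1) : ℝ) / c ^ d := by
    have h := integral_rpow_mul_exp_neg_mul_Ioi (a := (d : ℝ)) (r := c)
      (by exact_mod_cast hd) hc
    rw [hf]
    rw [h]
    have hg : Real.Gamma (d : ℝ) = (Nat.factorial (d - 1) : ℝ) := by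
      obtain ⟨n, rfl⟩ := Nat.exists_eq_add_of_le hd
      rw [add_comm]
      rw [show ((n + 1 : ℕ) : ℝ) = (n : ℝ) + 1 by push_cast; ring]
      simp [Real.Gamma_nat_eq_factorial]
    rw [hg, Real.rpow_natCast, div_pow, one_pow, one_div, inv_mul_eq_div]
  -- key pointwise identity for the substitution y = x⁻¹
  have hpt : ∀ x ∈ Ioi (0 : ℝ),
      ((|(-1 : ℝ)| * x ^ ((-1 : ℝ) - 1)) • f (x ^ (-1 : ℝ)))
        = (x ^ (d + 1))⁻¹ * Real.exp (-(c / x)) := by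
    intro x hx
    have hx0 : (0 : ℝ) < x := hx
    have h1 : x ^ (-1 : ℝ) = x⁻¹ := by rw [Real.rpow_neg_one]
    simp only [hf, h1, abs_neg, abs_one, one_mul, smul_eq_mul]
    have h2 : (x⁻¹) ^ ((d : ℝ) - 1) = x ^ ((1 : ℝ) - d) := by
      rw [Real.inv_rpow hx0.le, ← Real.rpow_neg hx0.le]
      ring_nf
    rw [h2]
    have h3 : x ^ ((-1 : ℝ) - 1) * x ^ ((1 : ℝ) - d) = (x ^ (d+1))⁻¹ := by
      rw [← Real.rpow_add hx0, ← Real.rpow_natCast x (d+1), ← Real.rpow_neg hx0.le]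
      congr 1
      push_cast
      ring
    rw [← mul_assoc, h3, div_eq_mul_inv]
  constructor
  · have := (integrableOn_Ioi_comp_rpow_iff f (p := (-1 : ℝ)) (by norm_num)).mpr hfi
    exact this.congr_fun hpt measurableSet_Ioi
  · rw [← hfint, ← MeasureTheory.integral_comp_rpow_Ioi f (p := (-1:ℝ)) (by norm_num)]
    exact (setIntegral_congr_fun measurableSet_Ioi hpt).symm


/-- For `d ≥ 1`, `z ≠ w` in `ℂ^d` and `j ∈ {1,…,d}`, the function
`t ↦ (1/(2πi t)^d) ((z̄_j − w̄_j)/(4t)) e^{-‖z−w‖²/(4t)}` is integrable on `(0,∞)` and its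
integral equals `(4^{d-1}(d-1)!/(2πi)^d) (z̄_j − w̄_j)/‖z−w‖^{2d}`; i.e. the `ε→0, L→∞` limit
of the regularized propagator coefficient is the Bochner–Martinelli coefficient. -/
theorem stmt_2 (d : ℕ) (hd : 1 ≤ d) (z w : EuclideanSpace ℂ (Fin d)) (hzw : z ≠ w)
    (j : Fin d) :
    IntegrableOn (fun t : ℝ =>
        ((2 * (Real.pi : ℂ) * Complex.I * (t : ℂ)) ^ d)⁻¹ *
          ((starRingEnd ℂ (z j) - starRingEnd ℂ (w j)) / (4 * (t : ℂ))) *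
          Complex.exp ((-(‖z - w‖ ^ 2 / (4 * t)) : ℝ) : ℂ))
      (Set.Ioi 0) volume ∧
    (∫ t in Set.Ioi (0 : ℝ),
        ((2 * (Real.pi : ℂ) * Complex.I * (t : ℂ)) ^ d)⁻¹ *
          ((starRingEnd ℂ (z j) - starRingEnd ℂ (w j)) / (4 * (t : ℂ))) *
          Complex.exp ((-(‖z - w‖ ^ 2 / (4 * t)) : ℝ) : ℂ)) =
      ((4 ^ (d - 1) * (Nat.factorial (d - 1) : ℂ)) / (2 * (Real.pi : ℂ) * Complex.I) ^ d) *
        ((starRingEnd ℂ (z j) - starRingEnd ℂ (w j)) / ((‖z - w‖ ^ (2 * d) : ℝ) : ℂ)) := by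
  have ha : (0 : ℝ) < ‖z - w‖ := norm_pos_iff.mpr (sub_ne_zero.mpr hzw)
  have hc : (0 : ℝ) < ‖z - w‖ ^ 2 / 4 := by positivity
  obtain ⟨hint, hval⟩ := real_key d hd hc
  set X : ℂ := starRingEnd ℂ (z j) - starRingEnd ℂ (w j) with hX
  set K : ℂ := X / (4 * (2 * (Real.pi : ℂ) * Complex.I) ^ d) with hK
  set g : ℝ → ℝ := fun t => (t ^ (d + 1))⁻¹ * Real.exp (-(‖z - w‖ ^ 2 / 4 / t)) with hg
  have hπ : ((Real.pi : ℂ)) ≠ 0 := Complex.ofReal_ne_zero.mpr Real.pi_ne_zero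
  have hpt : ∀ t ∈ Set.Ioi (0 : ℝ),
      ((2 * (Real.pi : ℂ) * Complex.I * (t : ℂ)) ^ d)⁻¹ * (X / (4 * (t : ℂ))) *
        Complex.exp ((-(‖z - w‖ ^ 2 / (4 * t)) : ℝ) : ℂ)
      = K * ((g t : ℝ) : ℂ) := by
    intro t ht
    have ht0 : (0 : ℝ) < t := ht
    have htC : (t : ℂ) ≠ 0 := by exact_mod_cast ht0.ne'
    have hexp : ((-(‖z - w‖ ^ 2 / (4 * t)) : ℝ) : ℂ)
        = ((-(‖z - w‖ ^ 2 / 4 / t) : ℝ) : ℂ) := by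
      norm_cast
      ring
    rw [hexp]
    simp only [hg, Complex.ofReal_mul, Complex.ofReal_inv, Complex.ofReal_pow,
      Complex.ofReal_exp]
    have h2 : ((2 * (Real.pi : ℂ) * Complex.I * (t : ℂ)) ^ d)⁻¹ * (X / (4 * (t : ℂ)))
        = K * ((t : ℂ) ^ (d + 1))⁻¹ := by
      rw [hK]
      field_simp
      ring
    rw [mul_comm K, mul_assoc, mul_comm _ K, ← mul_assoc, h2]
    ring
  constructor
  · exact IntegrableOn.congr_fun (hint.ofReal.const_mul K)
      (fun t ht => (hpt t ht).symm) measurableSet_Ioi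
  · rw [setIntegral_congr_fun measurableSet_Ioi hpt, integral_const_mul,
      show (∫ a in Set.Ioi (0:ℝ), ((g a : ℝ) : ℂ)) = ((∫ a in Set.Ioi (0:ℝ), g a : ℝ) : ℂ)
        from integral_ofReal, hval]
    obtain ⟨n, rfl⟩ := Nat.exists_eq_add_of_le hd
    have hd1 : 1 + n - 1 = n := by omega
    have hAC : ((‖z - w‖ : ℝ) : ℂ) ≠ 0 := Complex.ofReal_ne_zero.mpr ha.ne'
    rw [hK, hd1]
    push_cast
    have hP : (2 * (Real.pi : ℂ) * Complex.I) ≠ 0 := by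
      simp [hπ, Complex.I_ne_zero]
    have e1 : (((‖z - w‖ : ℂ)) ^ 2 / 4) ^ (1 + n)
        = ((‖z - w‖ : ℂ)) ^ (2 * (1 + n)) / 4 ^ (1 + n) := by
      rw [div_pow, ← pow_mul]
    rw [e1]
    have hA2 : ((‖z - w‖ : ℂ)) ^ (2 * (1 + n)) ≠ 0 := pow_ne_zero _ hAC
    field_simp
    ring
end

section
/- Let d ≥ 2 and 2 ≤ k ≤ d be integers. Let V be a complex vector space with basis {e_i^α : 1 ≤ i ≤ d, 1 ≤ α ≤ k−1}, and for each α ∈ {1,…,k−1} let f_α ∈ V^* be any linear functional with f_α(e_i^β) = 0 whenever β ≠ α. In the exterior algebra Λ•V set μ^α = e_1^α ∧ ⋯ ∧ e_d^α and Θ = θ_1 ∧ ⋯ ∧ θ_d where θ_i = Σ_{α=1}^{k−1} e_i^α. Then (Σ_{α=1}^{k−1} ι_{f_α}Θ) ∧ (ι_{f_1}μ^1) ∧ ⋯ ∧ (ι_{f_{k−1}}μ^{k−1}) = 0 in Λ•V. -/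
open ExteriorAlgebra CliffordAlgebra

namespace Stmt3Aux

variable {V : Type*} [AddCommGroup V] [Module ℂ V]

/-- Span of products of `n` generators. -/
noncomputable def T (n : ℕ) : Submodule ℂ (ExteriorAlgebra ℂ V) :=
  Submodule.span ℂ
    {x | ∃ l : List V, l.length = n ∧ x = (l.map (ExteriorAlgebra.ι ℂ)).prod}

lemma prod_mem_T (l : List V) : (l.map (ExteriorAlgebra.ι ℂ)).prod ∈ T l.length :=
  Submodule.subset_span ⟨l, rfl, rfl⟩

lemma one_mem_T : (1 : ExteriorAlgebra ℂ V) ∈ T 0 :=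
  Submodule.subset_span ⟨[], rfl, rfl⟩

lemma T_mul {m n : ℕ} {x y : ExteriorAlgebra ℂ V} (hx : x ∈ T m) (hy : y ∈ T n) :
    x * y ∈ T (m + n) := by
  induction hx using Submodule.span_induction with
  | mem x hx =>
    obtain ⟨l, hl, rfl⟩ := hx
    induction hy using Submodule.span_induction with
    | mem y hy =>
      obtain ⟨l', hl', rfl⟩ := hy
      rw [← List.prod_append, ← List.map_append]
      have := prod_mem_T (V := V) (l ++ l')
      rwa [List.length_append, hl, hl'] at this
    | zero => simp [Submodule.zero_mem]
    | add y z _ _ hy hz => rw [mul_add]; exact Submodule.add_mem _ hy hz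
    | smul c y _ hy => rw [mul_smul_comm]; exact Submodule.smul_mem _ _ hy
  | zero => simp [Submodule.zero_mem]
  | add x y _ _ hx' hy' => rw [add_mul]; exact Submodule.add_mem _ hx' hy'
  | smul c x _ hx' => rw [smul_mul_assoc]; exact Submodule.smul_mem _ _ hx'

lemma contract_prod (g : Module.Dual ℂ V) (l : List V) :
    contractLeft (Q := (0 : QuadraticForm ℂ V)) g ((l.map (ExteriorAlgebra.ι ℂ)).prod)
      ∈ T (l.length - 1) := by
  induction l with
  | nil => simp [contractLeft_one, Submodule.zero_mem]
  | cons a t ih =>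
    rw [List.map_cons, List.prod_cons, contractLeft_ι_mul]
    refine Submodule.sub_mem _ ?_ ?_
    · have := prod_mem_T (V := V) t
      simpa using Submodule.smul_mem _ (g a) this
    · cases t with
      | nil => simpa using Submodule.zero_mem _
      | cons b t' =>
        have h1 : (ExteriorAlgebra.ι ℂ a : ExteriorAlgebra ℂ V) ∈ T 1 := by
          have := prod_mem_T (V := V) [a]; simpa using this
        have h2 := T_mul h1 ih
        simp only [List.length_cons, Nat.add_sub_cancel] at h2 ⊢
        rw [Nat.add_comm] at h2
        exact h2

lemma contract_T {g : Module.Dual ℂ V} {n : ℕ} {x : ExteriorAlgebra ℂ V} (hx : x ∈ T n) :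
    contractLeft (Q := (0 : QuadraticForm ℂ V)) g x ∈ T (n - 1) := by
  induction hx using Submodule.span_induction with
  | mem x hx =>
    obtain ⟨l, hl, rfl⟩ := hx
    simpa [hl] using contract_prod g l
  | zero => simp [Submodule.zero_mem]
  | add x y _ _ hx' hy' => rw [map_add]; exact Submodule.add_mem _ hx' hy'
  | smul c x _ hx' => rw [map_smul]; exact Submodule.smul_mem _ _ hx'

lemma leib_list (g : Module.Dual ℂ V) (l : List V) (y : ExteriorAlgebra ℂ V) :
    contractLeft (Q := (0 : QuadraticForm ℂ V)) g ((l.map (ExteriorAlgebra.ι ℂ)).prod * y)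
      = contractLeft (Q := 0) g ((l.map (ExteriorAlgebra.ι ℂ)).prod) * y
        + ((-1 : ℂ) ^ l.length) •
            ((l.map (ExteriorAlgebra.ι ℂ)).prod * contractLeft (Q := 0) g y) := by
  induction l with
  | nil => simp [contractLeft_one]
  | cons a t ih =>
    simp only [List.map_cons, List.prod_cons, List.length_cons]
    rw [mul_assoc, contractLeft_ι_mul, ih, contractLeft_ι_mul, mul_add, sub_mul, smul_mul_assoc,
      mul_smul_comm, pow_succ, mul_neg_one, neg_smul]
    simp only [mul_assoc]
    abel

lemma leib_T {g : Module.Dual ℂ V} {n : ℕ} {x : ExteriorAlgebra ℂ V} (hx : x ∈ T n)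
    (y : ExteriorAlgebra ℂ V) :
    contractLeft (Q := (0 : QuadraticForm ℂ V)) g (x * y)
      = contractLeft (Q := 0) g x * y
        + ((-1 : ℂ) ^ n) • (x * contractLeft (Q := 0) g y) := by
  induction hx using Submodule.span_induction with
  | mem x hx => obtain ⟨l, hl, rfl⟩ := hx; rw [← hl]; exact leib_list g l y
  | zero => simp
  | add x z _ _ hx' hz' => simp only [add_mul, map_add, hx', hz', smul_add]; abel
  | smul c x _ hx' =>
    simp only [smul_mul_assoc, map_smul, hx', smul_add, smul_smul, mul_comm c]

lemma contract_prod_zero (g : Module.Dual ℂ V) (l : List V) (h : ∀ v ∈ l, g v = 0) :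
    contractLeft (Q := (0 : QuadraticForm ℂ V)) g ((l.map (ExteriorAlgebra.ι ℂ)).prod) = 0 := by
  induction l with
  | nil => simp [contractLeft_one]
  | cons a t ih =>
    rw [List.map_cons, List.prod_cons, contractLeft_ι_mul, h a (by simp),
      ih fun v hv => h v (by simp [hv]), zero_smul, mul_zero, sub_zero]

lemma T_eq_zero [Module.Finite ℂ V] {n : ℕ} (hn : Module.finrank ℂ V < n)
    {x : ExteriorAlgebra ℂ V} (hx : x ∈ T n) : x = 0 := by
  induction hx using Submodule.span_induction with
  | mem x hx =>
    obtain ⟨l, hl, rfl⟩ := hx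
    have hli : ¬ LinearIndependent ℂ l.get := by
      intro h
      have := h.fintype_card_le_finrank
      simp only [Fintype.card_fin, hl] at this
      omega
    have h0 := (ExteriorAlgebra.ιMulti ℂ l.length).map_linearDependent l.get hli
    rw [ιMulti_apply] at h0
    rw [← List.ofFn_get l, List.map_ofFn]
    exact h0
  | zero => rfl
  | add x y _ _ hx' hy' => rw [hx', hy', add_zero]
  | smul c x _ hx' => rw [hx', smul_zero]

end Stmt3Aux

open Stmt3Aux

/-- Let `d ≥ 2` and `2 ≤ k ≤ d`. Let `V` be a complex vector space with basis
`{e_i^α : 1 ≤ i ≤ d, 1 ≤ α ≤ k−1}` and, for each `α`, let `f_α ∈ V^*` vanish on all `e_i^β` with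
`β ≠ α`. In `Λ•V` set `μ^α = e_1^α ∧ ⋯ ∧ e_d^α` and `Θ = θ_1 ∧ ⋯ ∧ θ_d` with
`θ_i = Σ_α e_i^α`. Then `(Σ_α ι_{f_α}Θ) ∧ (ι_{f_1}μ^1) ∧ ⋯ ∧ (ι_{f_{k−1}}μ^{k−1}) = 0`.
Here the interior product `ι_f` is `CliffordAlgebra.contractLeft f` on
`ExteriorAlgebra ℂ V = CliffordAlgebra 0`, the odd degree `−1` derivation with `ι_f v = f v`. -/
theorem stmt_3 (d k : ℕ) (hd : 2 ≤ d) (hk : 2 ≤ k) (hkd : k ≤ d)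
    (V : Type*) [AddCommGroup V] [Module ℂ V]
    (e : Module.Basis (Fin d × Fin (k - 1)) ℂ V)
    (f : Fin (k - 1) → Module.Dual ℂ V)
    (hf : ∀ (α β : Fin (k - 1)) (i : Fin d), β ≠ α → f α (e (i, β)) = 0) :
    (∑ α : Fin (k - 1),
        CliffordAlgebra.contractLeft (f α)
          ((List.ofFn fun i : Fin d =>
            ExteriorAlgebra.ι ℂ (∑ β : Fin (k - 1), e (i, β))).prod)) *
      (List.ofFn fun α : Fin (k - 1) =>
        CliffordAlgebra.contractLeft (f α)
          ((List.ofFn fun i : Fin d => ExteriorAlgebra.ι ℂ (e (i, α))).prod)).prod = 0 := by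
  classical
  haveI : Module.Finite ℂ V := Module.Finite.of_basis e
  -- rewrite the lists as mapped lists
  have hΘeq : (List.ofFn fun i : Fin d => ExteriorAlgebra.ι ℂ (∑ β : Fin (k - 1), e (i, β)))
      = (List.ofFn fun i : Fin d => ∑ β : Fin (k - 1), e (i, β)).map (ExteriorAlgebra.ι ℂ) := by
    rw [List.map_ofFn]; rfl
  have hμeq : ∀ α : Fin (k - 1), (List.ofFn fun i : Fin d => ExteriorAlgebra.ι ℂ (e (i, α)))
      = (List.ofFn fun i : Fin d => e (i, α)).map (ExteriorAlgebra.ι ℂ) := fun α => by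
    rw [List.map_ofFn]; rfl
  rw [hΘeq]
  simp only [hμeq]
  set Θ : ExteriorAlgebra ℂ V :=
    ((List.ofFn fun i : Fin d => ∑ β : Fin (k - 1), e (i, β)).map (ExteriorAlgebra.ι ℂ)).prod
    with hΘ
  set a : Fin (k - 1) → ExteriorAlgebra ℂ V := fun α =>
    CliffordAlgebra.contractLeft (f α)
      (((List.ofFn fun i : Fin d => e (i, α)).map (ExteriorAlgebra.ι ℂ)).prod) with ha
  set F : Module.Dual ℂ V := ∑ α : Fin (k - 1), f α with hF
  set A : ExteriorAlgebra ℂ V := (List.ofFn a).prod with hA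
  -- memberships
  have hΘT : Θ ∈ T d := by
    have := prod_mem_T (List.ofFn fun i : Fin d => ∑ β : Fin (k - 1), e (i, β))
    rwa [List.length_ofFn] at this
  have haT : ∀ α, a α ∈ T (d - 1) := by
    intro α
    have := contract_prod (f α) (List.ofFn fun i : Fin d => e (i, α))
    rwa [List.length_ofFn] at this
  -- F contracts each a α to zero
  have hFμ : ∀ α, CliffordAlgebra.contractLeft (Q := (0 : QuadraticForm ℂ V)) F
      (((List.ofFn fun i : Fin d => e (i, α)).map (ExteriorAlgebra.ι ℂ)).prod)
      = CliffordAlgebra.contractLeft (f α)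
        (((List.ofFn fun i : Fin d => e (i, α)).map (ExteriorAlgebra.ι ℂ)).prod) := by
    intro α
    rw [hF, map_sum, LinearMap.sum_apply]
    refine Finset.sum_eq_single α (fun β _ hβα => ?_) (by simp)
    refine contract_prod_zero (f β) _ (fun v hv => ?_)
    rw [List.mem_ofFn] at hv
    obtain ⟨i, rfl⟩ := hv
    exact hf β α i (Ne.symm hβα)
  have hFa : ∀ α, CliffordAlgebra.contractLeft (Q := (0 : QuadraticForm ℂ V)) F (a α) = 0 := by
    intro α
    rw [ha]
    rw [contractLeft_comm, hFμ, contractLeft_contractLeft, neg_zero]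
  -- F contracts A to zero
  have hFL : ∀ L : List (ExteriorAlgebra ℂ V),
      (∀ x ∈ L, CliffordAlgebra.contractLeft (Q := (0 : QuadraticForm ℂ V)) F x = 0
        ∧ x ∈ T (d - 1)) →
      CliffordAlgebra.contractLeft (Q := (0 : QuadraticForm ℂ V)) F L.prod = 0 := by
    intro L
    induction L with
    | nil => intro _; simpa using contractLeft_one (0 : QuadraticForm ℂ V) F
    | cons x t ih =>
      intro h
      rw [List.prod_cons, leib_T (h x (by simp)).2, (h x (by simp)).1,
        ih (fun y hy => h y (by simp [hy])), zero_mul, mul_zero, smul_zero, add_zero]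
  have hFA : CliffordAlgebra.contractLeft (Q := (0 : QuadraticForm ℂ V)) F A = 0 := by
    refine hFL _ (fun x hx => ?_)
    rw [List.mem_ofFn] at hx
    obtain ⟨α, rfl⟩ := hx
    exact ⟨hFa α, haT α⟩
  -- A is in T ((k-1)*(d-1))
  have hLT : ∀ L : List (ExteriorAlgebra ℂ V), (∀ x ∈ L, x ∈ T (d - 1)) →
      L.prod ∈ T (L.length * (d - 1)) := by
    intro L
    induction L with
    | nil => intro _; simpa using one_mem_T
    | cons x t ih =>
      intro h
      rw [List.prod_cons]
      have := T_mul (h x (by simp)) (ih (fun y hy => h y (by simp [hy])))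
      rw [List.length_cons, Nat.succ_mul, Nat.add_comm]
      exact this
  have hAT : A ∈ T ((k - 1) * (d - 1)) := by
    have := hLT (List.ofFn a) (by
      intro x hx
      rw [List.mem_ofFn] at hx
      obtain ⟨α, rfl⟩ := hx
      exact haT α)
    rwa [List.length_ofFn] at this
  -- Θ * A = 0 by dimension count
  have hfr : Module.finrank ℂ V = d * (k - 1) := by
    rw [Module.finrank_eq_card_basis e, Fintype.card_prod, Fintype.card_fin, Fintype.card_fin]
  have harith : Module.finrank ℂ V < d + (k - 1) * (d - 1) := by
    rw [hfr]
    have h1 : (k - 1) * d = (k - 1) * (d - 1) + (k - 1) := by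
      conv_lhs => rw [show d = (d - 1) + 1 by omega]
      rw [Nat.mul_add, Nat.mul_one]
    calc d * (k - 1) = (k - 1) * (d - 1) + (k - 1) := by rw [Nat.mul_comm, h1]
      _ < (k - 1) * (d - 1) + d := Nat.add_lt_add_left (by omega) _
      _ = d + (k - 1) * (d - 1) := Nat.add_comm _ _
  have hΘA : Θ * A = 0 := T_eq_zero harith (T_mul hΘT hAT)
  -- conclude
  have key := leib_T (g := F) hΘT A
  rw [hΘA, map_zero, hFA, mul_zero, smul_zero, add_zero] at key
  have hsum : (∑ α : Fin (k - 1), CliffordAlgebra.contractLeft (f α) Θ)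
      = CliffordAlgebra.contractLeft (Q := (0 : QuadraticForm ℂ V)) F Θ := by
    rw [hF, map_sum, LinearMap.sum_apply]
  rw [hsum, ← key]
end

section
/- Let d ≥ 1 and k ≥ 2 be integers, let t_1, …, t_k be positive reals, and set T = t_1 + ⋯ + t_k. Define E : (ℂ^d)^{k−1} → ℂ by E(w) = exp(−Σ_{β=1}^{k−1} ‖w^β‖²/(4t_β) − ‖Σ_{β=1}^{k−1} w^β‖²/(4t_k)). For a real-differentiable function F : (ℂ^d)^{k−1} → ℂ define the Wirtinger derivative ∂F/∂w_i^β (w) := (1/2)(DF(w)(e_i^β) − i·DF(w)(i·e_i^β)), where DF(w) is the real Fréchet derivative of F at w and e_i^β is the standard basis vector of the (β,i) coordinate. Then for every α ∈ {1,…,k−1} and i ∈ {1,…,d}: ∂E/∂w_i^α (w) − Σ_{β=1}^{k−1} (t_β/T) ∂E/∂w_i^β (w) = −(conj(w_i^α)/(4t_α)) · E(w). -/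
set_option maxHeartbeats 1000000


/-- The Gaussian factor `E(w) = exp(−Σ_β ‖w^β‖²/(4t_β) − ‖Σ_β w^β‖²/(4t_k))`
(with `k = m + 1`), valued in `ℂ`. -/
noncomputable def gaussE (d m : ℕ) (t : Fin (m + 1) → ℝ)
    (w : Fin m → EuclideanSpace ℂ (Fin d)) : ℂ :=
  ((Real.exp (-(∑ β, ‖w β‖ ^ 2 / (4 * t β.castSucc)) -
      ‖∑ β, w β‖ ^ 2 / (4 * t (Fin.last m))) : ℝ) : ℂ)

/-- The (holomorphic) Wirtinger derivative `∂F/∂w_i^β (w) = (1/2)(DF(w)(e_i^β) − i·DF(w)(i·e_i^β))`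
of a function `F : (ℂ^d)^m → ℂ`, where `DF(w)` is the real Fréchet derivative of `F` at `w` and
`e_i^β` is the standard basis vector of the `(β,i)` coordinate. -/
noncomputable def wirt (d m : ℕ) (F : (Fin m → EuclideanSpace ℂ (Fin d)) → ℂ)
    (β : Fin m) (i : Fin d) (w : Fin m → EuclideanSpace ℂ (Fin d)) : ℂ :=
  (1 / 2 : ℂ) * ((fderiv ℝ F w) (Pi.single β (EuclideanSpace.single i 1)) -
    Complex.I * (fderiv ℝ F w) (Pi.single β (EuclideanSpace.single i Complex.I)))

open ContinuousLinearMap in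
lemma wirt_aux (d m : ℕ) (t : Fin (m + 1) → ℝ)
    (β : Fin m) (i : Fin d) (w : Fin m → EuclideanSpace ℂ (Fin d)) :
    HasFDerivAt (fun w : Fin m → EuclideanSpace ℂ (Fin d) =>
        Real.exp (-(∑ β, ‖w β‖ ^ 2 / (4 * t β.castSucc)) -
          ‖∑ β, w β‖ ^ 2 / (4 * t (Fin.last m))))
      (Real.exp (-(∑ β, ‖w β‖ ^ 2 / (4 * t β.castSucc)) -
          ‖∑ β, w β‖ ^ 2 / (4 * t (Fin.last m))) •
        ((-(∑ β : Fin m, (4 * t β.castSucc)⁻¹ •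
            (2 • ((innerSL ℝ (w β)).comp (proj β))))) -
          (4 * t (Fin.last m))⁻¹ •
            (2 • ((innerSL ℝ (∑ γ, w γ)).comp (∑ γ : Fin m, proj γ))))) w := by
  have h1 : ∀ β : Fin m, HasFDerivAt (fun w : Fin m → EuclideanSpace ℂ (Fin d) => ‖w β‖ ^ 2)
      (2 • ((innerSL ℝ (w β)).comp (proj β))) w :=
    fun β => (hasFDerivAt_apply (𝕜 := ℝ) β w).norm_sq
  have hsum : HasFDerivAt (fun w : Fin m → EuclideanSpace ℂ (Fin d) => ∑ γ, w γ)
      (∑ γ : Fin m, (proj γ : (Fin m → EuclideanSpace ℂ (Fin d)) →L[ℝ] EuclideanSpace ℂ (Fin d))) w :=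
    HasFDerivAt.fun_sum (fun γ _ => hasFDerivAt_apply (𝕜 := ℝ) γ w)
  have h2 := hsum.norm_sq
  have hS : HasFDerivAt (fun w : Fin m → EuclideanSpace ℂ (Fin d) =>
      -(∑ β, ‖w β‖ ^ 2 / (4 * t β.castSucc)) - ‖∑ β, w β‖ ^ 2 / (4 * t (Fin.last m)))
      ((-(∑ β : Fin m, (4 * t β.castSucc)⁻¹ •
            (2 • ((innerSL ℝ (w β)).comp (proj β))))) -
          (4 * t (Fin.last m))⁻¹ •
            (2 • ((innerSL ℝ (∑ γ, w γ)).comp (∑ γ : Fin m, proj γ)))) w := by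
    simp only [div_eq_inv_mul]
    exact ((HasFDerivAt.fun_sum (fun β _ => (h1 β).const_mul ((4 * t β.castSucc)⁻¹))).neg).sub
      (h2.const_mul ((4 * t (Fin.last m))⁻¹))
  exact hS.exp

lemma wirt_gaussE (d m : ℕ) (t : Fin (m + 1) → ℝ)
    (β : Fin m) (i : Fin d) (w : Fin m → EuclideanSpace ℂ (Fin d)) :
    wirt d m (gaussE d m t) β i w =
      -((starRingEnd ℂ) (w β i) / ((4 * t β.castSucc : ℝ) : ℂ) +
        (starRingEnd ℂ) ((∑ γ, w γ) i) / ((4 * t (Fin.last m) : ℝ) : ℂ)) * gaussE d m t w := by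
  have hE : HasFDerivAt (gaussE d m t)
      (Complex.ofRealCLM.comp
        (Real.exp (-(∑ β, ‖w β‖ ^ 2 / (4 * t β.castSucc)) -
          ‖∑ β, w β‖ ^ 2 / (4 * t (Fin.last m))) •
        ((-(∑ β : Fin m, (4 * t β.castSucc)⁻¹ •
            (2 • ((innerSL ℝ (w β)).comp (ContinuousLinearMap.proj β))))) -
          (4 * t (Fin.last m))⁻¹ •
            (2 • ((innerSL ℝ (∑ γ, w γ)).comp
              (∑ γ : Fin m, ContinuousLinearMap.proj γ)))))) w :=
    Complex.ofRealCLM.hasFDerivAt.comp w (wirt_aux d m t β i w)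
  rw [wirt, hE.fderiv]
  simp only [ContinuousLinearMap.coe_comp', Function.comp_apply,
    ContinuousLinearMap.coe_smul', Pi.smul_apply, ContinuousLinearMap.sub_apply,
    ContinuousLinearMap.neg_apply, ContinuousLinearMap.coe_sum', Finset.sum_apply,
    ContinuousLinearMap.smul_apply, ContinuousLinearMap.comp_apply,
    ContinuousLinearMap.proj_apply, innerSL_apply_apply, Pi.single_apply,
    Complex.ofRealCLM_apply]
  simp only [apply_ite (inner (𝕜 := ℝ) _), inner_zero_right, Finset.sum_ite_eq',
    Finset.mem_univ, if_true, PiLp.inner_apply, EuclideanSpace.single_apply,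
    Complex.inner, mul_ite, mul_zero, Finset.sum_ite_eq, smul_ite, smul_zero,
    Finset.sum_ite_eq, smul_eq_mul]
  have hc : ∀ z : ℂ, (starRingEnd ℂ) z = (z.re : ℂ) - (z.im : ℂ) * Complex.I := fun z => by
    simp [Complex.ext_iff]
  simp only [gaussE, mul_one, smul_eq_mul, Complex.mul_re, Complex.conj_re, Complex.conj_im,
    Complex.I_re, Complex.I_im, mul_zero, mul_one, zero_sub, neg_neg, sub_zero,
    Complex.one_re, Complex.one_im]
  rw [hc, hc]
  push_cast
  ring

/-- For `d ≥ 1`, `k ≥ 2` (written `k = m + 1`, `m ≥ 1`), positive reals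
`t_1, …, t_k` with `T = t_1 + ⋯ + t_k`, every `α ∈ {1,…,k−1}`, `i ∈ {1,…,d}` and
`w ∈ (ℂ^d)^{k−1}`:
`∂E/∂w_i^α (w) − Σ_β (t_β/T) ∂E/∂w_i^β (w) = −(conj(w_i^α)/(4t_α)) · E(w)`. -/
theorem stmt_13 (d m : ℕ) (hd : 1 ≤ d) (hm : 1 ≤ m)
    (t : Fin (m + 1) → ℝ) (ht : ∀ j, 0 < t j)
    (α : Fin m) (i : Fin d) (w : Fin m → EuclideanSpace ℂ (Fin d)) :
    wirt d m (gaussE d m t) α i w -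
      ∑ β : Fin m, ((t β.castSucc / ∑ γ, t γ : ℝ) : ℂ) * wirt d m (gaussE d m t) β i w =
    -(starRingEnd ℂ (w α i) / ((4 * t α.castSucc : ℝ) : ℂ)) * gaussE d m t w := by
  have hT : (0:ℝ) < ∑ γ, t γ := Finset.sum_pos (fun j _ => ht j) Finset.univ_nonempty
  set T : ℝ := ∑ γ, t γ with hTdef
  set E := gaussE d m t w with hE
  set C := (starRingEnd ℂ) ((∑ γ, w γ) i) with hC
  have hsum_t : ∑ β : Fin m, t β.castSucc = T - t (Fin.last m) := by
    rw [hTdef, Fin.sum_univ_castSucc]; ring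
  have hCsum : C = ∑ γ : Fin m, (starRingEnd ℂ) (w γ i) := by
    rw [hC, ← map_sum]
    congr 1
    rw [WithLp.ofLp_sum]
    exact Finset.sum_apply i Finset.univ _
  have h2 : ((t (Fin.last m) : ℝ) : ℂ) ≠ 0 := Complex.ofReal_ne_zero.2 (ht _).ne'
  have h3 : ((T : ℝ) : ℂ) ≠ 0 := Complex.ofReal_ne_zero.2 hT.ne'
  have step : ∀ β : Fin m, ((t β.castSucc / T : ℝ) : ℂ) *
      (-((starRingEnd ℂ) (w β i) / ((4 * t β.castSucc : ℝ):ℂ) +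
          C / ((4 * t (Fin.last m) : ℝ):ℂ)) * E)
      = (starRingEnd ℂ) (w β i) * (-(((4 * T : ℝ):ℂ))⁻¹ * E) +
        ((t β.castSucc : ℝ):ℂ) *
          (-(C * (((4 * t (Fin.last m) * T : ℝ):ℂ))⁻¹ * E)) := by
    intro β
    have h1 : ((t β.castSucc : ℝ) : ℂ) ≠ 0 := Complex.ofReal_ne_zero.2 (ht _).ne'
    push_cast
    field_simp
    ring
  have key : ∑ β : Fin m, ((t β.castSucc / T : ℝ) : ℂ) *
      (-((starRingEnd ℂ) (w β i) / ((4 * t β.castSucc : ℝ):ℂ) +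
          C / ((4 * t (Fin.last m) : ℝ):ℂ)) * E)
      = -(C / ((4 * t (Fin.last m) : ℝ):ℂ)) * E := by
    rw [Finset.sum_congr rfl (fun β _ => step β), Finset.sum_add_distrib,
      ← Finset.sum_mul, ← Finset.sum_mul, ← hCsum]
    have : (∑ β : Fin m, ((t β.castSucc : ℝ) : ℂ)) = ((T - t (Fin.last m) : ℝ) : ℂ) := by
      push_cast [← hsum_t]; ring
    rw [this]
    push_cast
    field_simp
    ring
  simp only [wirt_gaussE d m t _ i w, ← hE, ← hC, ← hTdef, key]
  ring
end

section
/- Let d ≥ 1 be an integer. For a real-differentiable function f : ℂ^d → ℂ define the antiholomorphic Wirtinger derivative ∂f/∂ū_i (u) := (1/2)(Df(u)(e_i) + i·Df(u)(i·e_i)), where Df(u) is the real Fréchet derivative of f at u and e_i the i-th standard basis vector of ℂ^d. Then for every u ∈ ℂ^d with u ≠ 0, Σ_{i=1}^{d} ∂/∂ū_i ( conj(u_i) / ‖u‖^{2d} ) (u) = 0. -/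
open scoped RealInnerProductSpace

/-- For `d ≥ 1` and `u ∈ ℂ^d` with `u ≠ 0`,
`Σ_{i=1}^{d} ∂/∂ū_i (conj(u_i)/‖u‖^{2d}) (u) = 0`, where the antiholomorphic Wirtinger
derivative of a real-differentiable `f : ℂ^d → ℂ` is
`∂f/∂ū_i (u) = (1/2)(Df(u)(e_i) + i·Df(u)(i·e_i))` with `Df(u)` the real Fréchet derivative
of `f` at `u` and `e_i` the `i`-th standard basis vector of `ℂ^d`. -/
theorem stmt_16 (d : ℕ) (hd : 1 ≤ d) (u : EuclideanSpace ℂ (Fin d)) (hu : u ≠ 0) :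
    ∑ i : Fin d, (1 / 2 : ℂ) *
      ((fderiv ℝ (fun v : EuclideanSpace ℂ (Fin d) =>
            starRingEnd ℂ (v i) / ((‖v‖ ^ (2 * d) : ℝ) : ℂ)) u)
          (EuclideanSpace.single i 1) +
        Complex.I *
          (fderiv ℝ (fun v : EuclideanSpace ℂ (Fin d) =>
              starRingEnd ℂ (v i) / ((‖v‖ ^ (2 * d) : ℝ) : ℂ)) u)
            (EuclideanSpace.single i Complex.I)) = 0 := by
  classical
  have hu0 : (0:ℝ) < ‖u‖ := norm_pos_iff.mpr hu
  have hRpos : (0:ℝ) < ‖u‖ ^ (2*d) := pow_pos hu0 _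
  have hRc : ((‖u‖ ^ (2*d) : ℝ):ℂ) ≠ 0 := by exact_mod_cast hRpos.ne'
  set K : ℝ := (d:ℝ) * (‖u‖^2)^(d-1) with hKdef
  have hnorm : HasFDerivAt (fun v : EuclideanSpace ℂ (Fin d) => ‖v‖^2) (2 • innerSL ℝ u) u :=
    (hasStrictFDerivAt_norm_sq u).hasFDerivAt
  have hpow : HasFDerivAt (fun v : EuclideanSpace ℂ (Fin d) => ‖v‖^(2*d))
      (K • (2 • innerSL ℝ u)) u := by
    have h := (hasDerivAt_pow d (‖u‖^2)).comp_hasFDerivAt u hnorm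
    simpa [hKdef, Function.comp_def, ← pow_mul] using h
  have hden : HasFDerivAt (fun v : EuclideanSpace ℂ (Fin d) => ((‖v‖^(2*d) : ℝ) : ℂ))
      (Complex.ofRealCLM.comp (K • (2 • innerSL ℝ u))) u :=
    Complex.ofRealCLM.hasFDerivAt.comp u hpow
  have hinv : HasFDerivAt (fun v : EuclideanSpace ℂ (Fin d) => (((‖v‖^(2*d) : ℝ) : ℂ))⁻¹)
      ((-(ContinuousLinearMap.mulLeftRight ℝ ℂ (((‖u‖ ^ (2*d) : ℝ):ℂ))⁻¹
          (((‖u‖ ^ (2*d) : ℝ):ℂ))⁻¹)).comp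
        (Complex.ofRealCLM.comp (K • (2 • innerSL ℝ u)))) u :=
    (hasFDerivAt_inv' (𝕜 := ℝ) hRc).comp u hden
  have hre : ∀ i : Fin d, ⟪u, EuclideanSpace.single i (1:ℂ)⟫ = (u i).re := by
    intro i
    simp [PiLp.inner_apply, EuclideanSpace.single_apply, apply_ite Complex.re,
      Finset.sum_ite_eq]
  have him : ∀ i : Fin d, ⟪u, EuclideanSpace.single i (Complex.I)⟫ = (u i).im := by
    intro i
    simp [PiLp.inner_apply, EuclideanSpace.single_apply, apply_ite Complex.re,
      Finset.sum_ite_eq, Complex.mul_re]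
  have key : ∀ i : Fin d, (1 / 2 : ℂ) *
      ((fderiv ℝ (fun v : EuclideanSpace ℂ (Fin d) =>
            starRingEnd ℂ (v i) / ((‖v‖ ^ (2 * d) : ℝ) : ℂ)) u)
          (EuclideanSpace.single i 1) +
        Complex.I *
          (fderiv ℝ (fun v : EuclideanSpace ℂ (Fin d) =>
              starRingEnd ℂ (v i) / ((‖v‖ ^ (2 * d) : ℝ) : ℂ)) u)
            (EuclideanSpace.single i Complex.I))
      = -(K:ℂ) * (((‖u‖ ^ (2*d) : ℝ):ℂ))⁻¹ * (((‖u‖ ^ (2*d) : ℝ):ℂ))⁻¹ *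
          (starRingEnd ℂ (u i) * u i) + (((‖u‖ ^ (2*d) : ℝ):ℂ))⁻¹ := by
    intro i
    have h1 : HasFDerivAt (fun v : EuclideanSpace ℂ (Fin d) => (starRingEnd ℂ) (v i))
        (Complex.conjCLE.toContinuousLinearMap.comp
          ((EuclideanSpace.proj i).restrictScalars ℝ)) u :=
      (Complex.conjCLE.toContinuousLinearMap.comp
        ((EuclideanSpace.proj i).restrictScalars ℝ)).hasFDerivAt
    have h2 := h1.mul hinv
    have hfun : (fun v : EuclideanSpace ℂ (Fin d) =>
        starRingEnd ℂ (v i) / ((‖v‖ ^ (2 * d) : ℝ) : ℂ)) =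
        (fun v : EuclideanSpace ℂ (Fin d) =>
          starRingEnd ℂ (v i) * (((‖v‖ ^ (2 * d) : ℝ) : ℂ))⁻¹) :=
      funext fun v => div_eq_mul_inv _ _
    rw [hfun, HasFDerivAt.fderiv (f := fun v : EuclideanSpace ℂ (Fin d) =>
      starRingEnd ℂ (v i) * (((‖v‖ ^ (2 * d) : ℝ) : ℂ))⁻¹) h2]
    simp only [ContinuousLinearMap.add_apply, ContinuousLinearMap.smul_apply,
      ContinuousLinearMap.comp_apply, ContinuousLinearMap.neg_apply,
      ContinuousLinearMap.mulLeftRight_apply, Complex.ofRealCLM_apply,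
      ContinuousLinearMap.coe_smul', Pi.smul_apply, innerSL_apply_apply,
      ContinuousLinearMap.coe_restrictScalars', ContinuousLinearEquiv.coe_coe,
      Complex.conjCLE_apply, PiLp.proj_apply, hre, him]
    simp only [smul_eq_mul, EuclideanSpace.single_apply, if_pos rfl, map_one, Complex.conj_I,
      ← Complex.ofReal_inv]
    rw [Complex.ext_iff]
    constructor <;>
      simp [Complex.mul_re, Complex.mul_im, Complex.add_re, Complex.add_im, Complex.neg_re,
        Complex.neg_im, Complex.ofReal_re, Complex.ofReal_im, Complex.I_re, Complex.I_im,
        Complex.conj_re, Complex.conj_im] <;>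
      ring
  rw [Finset.sum_congr rfl fun i _ => key i]
  have hsum : ∑ i : Fin d, starRingEnd ℂ (u i) * u i = ((‖u‖^2 : ℝ) : ℂ) := by
    have hn : ‖u‖^2 = ∑ i : Fin d, ‖u i‖^2 := by
      rw [EuclideanSpace.norm_eq]
      rw [Real.sq_sqrt (by positivity)]
    rw [hn]
    push_cast
    refine Finset.sum_congr rfl fun i _ => ?_
    rw [mul_comm, Complex.mul_conj]
    simp [Complex.normSq_eq_norm_sq]
  have hK : (K:ℂ) * ((‖u‖^2 : ℝ):ℂ) = (d:ℂ) * ((‖u‖^(2*d) : ℝ):ℂ) := by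
    have : K * ‖u‖^2 = (d:ℝ) * ‖u‖^(2*d) := by
      rw [hKdef, pow_mul, mul_assoc, ← pow_succ, Nat.sub_add_cancel hd]
    exact_mod_cast congrArg (Complex.ofReal) this
  rw [Finset.sum_add_distrib, ← Finset.mul_sum, hsum, Finset.sum_const]
  simp only [Finset.card_univ, Fintype.card_fin, nsmul_eq_mul]
  have hr : ((‖u‖^(2*d):ℝ):ℂ) * (((‖u‖^(2*d):ℝ):ℂ))⁻¹ = 1 := mul_inv_cancel₀ hRc
  linear_combination (-((((‖u‖^(2*d):ℝ):ℂ))⁻¹ * (((‖u‖^(2*d):ℝ):ℂ))⁻¹)) * hK +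
    (-((d:ℂ) * (((‖u‖^(2*d):ℝ):ℂ))⁻¹)) * hr
end
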